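/- arXiv:2001.08846 — 10 statements merged into one kernel-verified Lean document; each statement's English description precedes it below -/
import Mathlib

section
/- Let ≈ be a right-invariant equivalence relation on Σ* and let A ⊆ Σ* respect ≈. Then for every j ≥ 1, the cardinality of A^(j) is at most the cardinality of the quotient Σ*/≈ (the set of ≈-equivalence classes). -/
/-- Shortlex order on strings: first by length, then lexicographically. -/
def ShortlexLt {σ : Type*} [LinearOrder σ] (x y : List σ) : Prop :=
  x.length < y.length ∨ (x.length = y.length ∧ List.Lex (· < ·) x y)

/-- `y` is the `j`-th `A`-extension of `x`: `y ∈ A_x` and exactly `j - 1`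
elements of `A_x = {z | x ++ z ∈ A}` are shortlex-smaller than `y`. -/
def IsNthExt {σ : Type*} [LinearOrder σ] (A : Set (List σ)) (j : ℕ) (x y : List σ) : Prop :=
  x ++ y ∈ A ∧ {z | x ++ z ∈ A ∧ ShortlexLt z y}.encard = ((j - 1 : ℕ) : ℕ∞)

/-- `A^(j)`: the set of all `j`-th `A`-extensions. -/
def ExtSet {σ : Type*} [LinearOrder σ] (A : Set (List σ)) (j : ℕ) : Set (List σ) :=
  {y | ∃ x, IsNthExt A j x y}

theorem shortlex_irrefl {σ : Type*} [LinearOrder σ] (x : List σ) : ¬ ShortlexLt x x := by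
  rintro (h | ⟨-, h⟩)
  · exact lt_irrefl _ h
  · exact irrefl_of (List.Lex (· < ·)) x h

theorem shortlex_trans {σ : Type*} [LinearOrder σ] {x y z : List σ}
    (h1 : ShortlexLt x y) (h2 : ShortlexLt y z) : ShortlexLt x z := by
  rcases h1 with h1 | ⟨e1, l1⟩ <;> rcases h2 with h2 | ⟨e2, l2⟩
  · exact Or.inl (h1.trans h2)
  · exact Or.inl (e2 ▸ h1)
  · exact Or.inl (e1 ▸ h2)
  · exact Or.inr ⟨e1.trans e2, List.lex_trans (fun h1 h2 => lt_trans h1 h2) l1 l2⟩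

theorem shortlex_trichot {σ : Type*} [LinearOrder σ] (x y : List σ) :
    ShortlexLt x y ∨ x = y ∨ ShortlexLt y x := by
  rcases lt_trichotomy x.length y.length with h | h | h
  · exact Or.inl (Or.inl h)
  · rcases trichotomous_of (List.Lex ((· < ·) : σ → σ → Prop)) x y with l | l | l
    · exact Or.inl (Or.inr ⟨h, l⟩)
    · exact Or.inr (Or.inl l)
    · exact Or.inr (Or.inr (Or.inr ⟨h.symm, l⟩))
  · exact Or.inr (Or.inr (Or.inl h))

/-- Uniqueness of the `n+1`-th element of a set under shortlex. -/
theorem shortlex_unique {σ : Type*} [LinearOrder σ] {S : Set (List σ)} {y y' : List σ}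
    (hy : y ∈ S) (hy' : y' ∈ S) {n : ℕ}
    (h1 : {z | z ∈ S ∧ ShortlexLt z y}.encard = (n : ℕ∞))
    (h2 : {z | z ∈ S ∧ ShortlexLt z y'}.encard = (n : ℕ∞)) : y = y' := by
  have key : ∀ a b : List σ, a ∈ S → ShortlexLt a b →
      {z | z ∈ S ∧ ShortlexLt z a}.encard = (n : ℕ∞) →
      {z | z ∈ S ∧ ShortlexLt z b}.encard = (n : ℕ∞) → False := by
    intro a b ha hab hca hcb
    have hsub : insert a {z | z ∈ S ∧ ShortlexLt z a} ⊆ {z | z ∈ S ∧ ShortlexLt z b} := by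
      rintro z (rfl | ⟨hz1, hz2⟩)
      · exact ⟨ha, hab⟩
      · exact ⟨hz1, shortlex_trans hz2 hab⟩
    have hnot : a ∉ {z | z ∈ S ∧ ShortlexLt z a} := fun h => shortlex_irrefl a h.2
    have := Set.encard_insert_of_notMem hnot
    rw [hca] at this
    have hle := Set.encard_le_encard hsub
    rw [this, hcb] at hle
    rw [ENat.add_one_le_iff (by simp)] at hle
    exact lt_irrefl _ hle
  rcases shortlex_trichot y y' with h | h | h
  · exact absurd (key y y' hy h h1 h2) (by simp)
  · exact h
  · exact absurd (key y' y hy' h h2 h1) (by simp)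

/-- If `≈` is a right-invariant equivalence relation on `Σ*` respected by `A`,
then for every `j ≥ 1`, `|A^(j)| ≤ |Σ*/≈|`. -/
theorem stmt0 {σ : Type*} [Fintype σ] [Nonempty σ] [LinearOrder σ]
    (r : Setoid (List σ))
    (hri : ∀ x y z : List σ, r.r x y → r.r (x ++ z) (y ++ z))
    (A : Set (List σ))
    (hresp : ∀ x y : List σ, r.r x y → (x ∈ A ↔ y ∈ A))
    (j : ℕ) (hj : 1 ≤ j) :
    Cardinal.mk (ExtSet A j) ≤ Cardinal.mk (Quotient r) := by
  have hext : ∀ y : ExtSet A j, ∃ x, IsNthExt A j x y.1 := fun y => y.2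
  choose w hw using hext
  apply Cardinal.mk_le_of_injective (f := fun y => (Quotient.mk r (w y)))
  intro y y' h
  have hr : r.r (w y) (w y') := Quotient.exact h
  have hy := hw y
  have hy' := hw y'
  -- sets agree
  have hsame : ∀ z : List σ, (w y ++ z ∈ A) ↔ (w y' ++ z ∈ A) := fun z =>
    hresp _ _ (hri _ _ z hr)
  have hy'2 : IsNthExt A j (w y) y'.1 := by
    obtain ⟨m1, m2⟩ := hy'
    refine ⟨(hsame _).mpr m1, ?_⟩
    rw [show {z | w y ++ z ∈ A ∧ ShortlexLt z y'.1} = {z | w y' ++ z ∈ A ∧ ShortlexLt z y'.1}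
      from Set.ext fun z => by simp [hsame z]]
    exact m2
  have : y.1 = y'.1 := shortlex_unique (S := {z | w y ++ z ∈ A}) hy.1 hy'2.1 hy.2 hy'2.2
  exact Subtype.ext this
end

section
/- Let I ⊆ ℕ be infinite and suppose GAPS_I is infinite. Then the language B_I = {0^n : n ∈ I} over the one-letter alphabet {0} has no infinite regular subset; that is, every infinite language A ⊆ B_I is not regular. -/
/-- If `I ⊆ ℕ` is infinite and `GAPS_I = {n^I - n : n ∈ I}` is infinite
(where `n^I` is the least element of `I` greater than `n`), then
`B_I = {0^n : n ∈ I}` has no infinite regular subset. -/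
theorem stmt4 (I : Set ℕ) (hI : I.Infinite)
    (hgaps : {d : ℕ | ∃ n ∈ I, ∃ m ∈ I, n < m ∧ (∀ k ∈ I, n < k → m ≤ k) ∧ d = m - n}.Infinite)
    (A : Set (List (Fin 1)))
    (hsub : A ⊆ {w | ∃ n ∈ I, w = List.replicate n 0})
    (hinf : A.Infinite) :
    ¬ Language.IsRegular A := by
  rintro ⟨σ, hfin, M, hM⟩
  -- lengths of words in A form an infinite set
  have hlen : (List.length '' A).Infinite := by
    apply Set.Infinite.image _ hinf
    intro x hx y hy hxy
    obtain ⟨n, _, rfl⟩ := hsub hx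
    obtain ⟨m, _, rfl⟩ := hsub hy
    simp_all
  obtain ⟨L, hLA, hLcard⟩ : ∃ L ∈ List.length '' A, Fintype.card σ ≤ L := by
    obtain ⟨L, hLA, hL⟩ := hlen.exists_gt (Fintype.card σ)
    exact ⟨L, hLA, hL.le⟩
  obtain ⟨x, hxA, rfl⟩ := hLA
  have hxacc : x ∈ M.accepts := by rw [hM]; exact hxA
  obtain ⟨a, b, c, hxabc, _, hbne, hpump⟩ := M.pumping_lemma hxacc hLcard
  set q := b.length with hq
  have hq1 : 1 ≤ q := List.length_pos_iff.mpr hbne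
  set n0 := a.length + c.length with hn0
  -- all n0 + q * k are in I
  have hAP : ∀ k : ℕ, n0 + q * k ∈ I := by
    intro k
    have hmem : a ++ (List.replicate k b).flatten ++ c ∈ ({a} : Language (Fin 1)) * KStar.kstar {b} * {c} := by
      apply Language.append_mem_mul
      apply Language.append_mem_mul
      · rfl
      · exact Language.join_mem_kstar (by intro y hy; exact (List.eq_of_mem_replicate hy))
      · rfl
    have hinA : a ++ (List.replicate k b).flatten ++ c ∈ A := by
      rw [← hM]; exact hpump hmem
    obtain ⟨n, hnI, hn⟩ := hsub hinA
    have hlen' : (a ++ (List.replicate k b).flatten ++ c).length = n := by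
      rw [hn]; simp
    have : n = n0 + q * k := by
      rw [← hlen']
      simp [List.length_flatten, List.map_replicate, hn0, hq]
      ring
    rwa [← this]
  -- every gap is at most n0 + q
  apply hgaps
  apply Set.Finite.subset (Set.finite_Iic (n0 + q))
  rintro d ⟨n, hnI, m, hmI, hnm, hmin, rfl⟩
  simp only [Set.mem_Iic]
  rcases lt_or_ge n n0 with h | h
  · have hn0I : n0 ∈ I := by simpa using hAP 0
    have := hmin n0 hn0I h
    omega
  · set k := (n - n0) / q + 1 with hk
    have he : n0 + q * k ∈ I := hAP k
    have hdm := Nat.div_add_mod (n - n0) q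
    have hmod : (n - n0) % q < q := Nat.mod_lt _ hq1
    have hkq : q * k = q * ((n - n0) / q) + q := by rw [hk]; ring
    have hlt : n < n0 + q * k := by omega
    have hle : n0 + q * k ≤ n + q := by omega
    have := hmin _ he hlt
    omega
end

section
/- The language B = {0^p : p is prime} over the one-letter alphabet {0} has no infinite regular subset; that is, every infinite language A ⊆ B is not regular. -/
/-- The language `B = {0^p : p prime}` over the one-letter alphabet `{0}` has
no infinite regular subset. -/
theorem stmt5 (A : Set (List (Fin 1)))
    (hsub : A ⊆ {w | ∃ p : ℕ, p.Prime ∧ w = List.replicate p 0})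
    (hinf : A.Infinite) :
    ¬ Language.IsRegular A := by
  rintro ⟨σ, instF, M, hM⟩
  -- lengths are unbounded
  have hinj : Set.InjOn List.length A := by
    intro x hx y hy hxy
    have hx' : x = List.replicate x.length 0 := by
      apply List.eq_replicate_of_mem; intro b _; exact Subsingleton.elim _ _
    have hy' : y = List.replicate y.length 0 := by
      apply List.eq_replicate_of_mem; intro b _; exact Subsingleton.elim _ _
    rw [hx', hy', hxy]
  have himg : (List.length '' A).Infinite := hinf.image hinj
  obtain ⟨m, ⟨w, hwA, hwlen⟩, hnm⟩ := himg.exists_gt (Fintype.card σ)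
  have hwacc : w ∈ M.accepts := by rw [hM]; exact hwA
  obtain ⟨a, b, c, heq, hablen, hbne, hpump⟩ :=
    M.pumping_lemma hwacc (by omega)
  obtain ⟨p, hp, hw'⟩ := hsub hwA
  have hplen : w.length = p := by rw [hw', List.length_replicate]
  -- pumped word with i = p + 1 copies of b
  set y := a ++ (List.replicate (p + 1) b).flatten ++ c with hy
  have hyA : y ∈ A := by
    rw [← hM]
    apply hpump
    refine ⟨a ++ (List.replicate (p + 1) b).flatten, ⟨a, rfl, _, ?_, rfl⟩, c, rfl, rfl⟩
    exact ⟨List.replicate (p + 1) b, rfl, fun z hz => List.eq_of_mem_replicate hz⟩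
  obtain ⟨q, hq, hy'⟩ := hsub hyA
  have hqlen : y.length = q := by rw [hy', List.length_replicate]
  have hylen : y.length = a.length + (p + 1) * b.length + c.length := by
    simp [hy, List.length_flatten, List.map_replicate, List.sum_replicate, smul_eq_mul]; omega
  have hwlen2 : a.length + b.length + c.length = p := by
    rw [← hplen, heq]; simp; omega
  have hb1 : 1 ≤ b.length := List.length_pos_iff.mpr hbne
  -- q = p + p * b.length = p * (1 + b.length)
  have hq2 : q = p * (1 + b.length) := by
    rw [← hqlen, hylen]; ring_nf; omega
  have : p ∣ q := ⟨_, hq2⟩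
  have := (Nat.Prime.eq_one_or_self_of_dvd hq p this)
  have hp2 := hp.two_le
  rcases this with h | h
  · omega
  · nlinarith [hq.two_le]
end

section
/- The language A = {0^m 1^n : m, n ≥ 1 and gcd(m, n) = 1} over the alphabet {0,1} is not regular. -/
/-- The language `A = {0^m 1^n : m, n ≥ 1 and gcd(m,n) = 1}` is not regular. -/
theorem stmt7 :
    ¬ Language.IsRegular
      {w : List (Fin 2) | ∃ m n : ℕ, 1 ≤ m ∧ 1 ≤ n ∧ Nat.gcd m n = 1 ∧
        w = List.replicate m 0 ++ List.replicate n 1} := by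
  rintro ⟨σ, fin, M, hM⟩
  obtain ⟨q, hqge, hq⟩ := Nat.exists_infinite_primes (Fintype.card σ + 2)
  haveI : Fact q.Prime := ⟨hq⟩
  obtain ⟨m, hm⟩ : ∃ m', m' = Fintype.card σ + 1 := ⟨_, rfl⟩
  have hmq : m < q := by omega
  have hqm : ¬ q ∣ m := fun h => by have := Nat.le_of_dvd (by omega) h; omega
  have hgcdmq : Nat.gcd m q = 1 :=
    Nat.coprime_comm.mp (hq.coprime_iff_not_dvd.mpr hqm)
  -- the initial word is accepted
  have hx : (List.replicate m (0 : Fin 2) ++ List.replicate q 1) ∈ M.accepts := by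
    rw [hM]
    exact ⟨m, q, by omega, by omega, hgcdmq, rfl⟩
  obtain ⟨a, b, c, hsplit, hlen, hbne, hpump⟩ :=
    M.pumping_lemma hx (by simp; omega)
  -- all the letters of a and b are 0
  have hab : a ++ b = List.replicate (a.length + b.length) (0 : Fin 2) := by
    have hpre : a ++ b <+: List.replicate m (0 : Fin 2) ++ List.replicate q 1 :=
      ⟨c, hsplit.symm⟩
    have h1 := List.prefix_iff_eq_take.mp hpre
    rw [List.take_append_of_le_length (by simp; omega), List.take_replicate] at h1
    rw [h1, List.length_append]
    congr 1
    omega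
  have hz : ∀ e ∈ a ++ b, e = (0 : Fin 2) := by
    intro e he
    rw [hab] at he
    exact List.eq_of_mem_replicate he
  have ha0 : a.count (0 : Fin 2) = a.length :=
    List.count_eq_length.mpr fun e he => (hz e (List.mem_append_left _ he)).symm
  have hb0 : b.count (0 : Fin 2) = b.length :=
    List.count_eq_length.mpr fun e he => (hz e (List.mem_append_right _ he)).symm
  have ha1 : a.count (1 : Fin 2) = 0 :=
    List.count_eq_zero.mpr fun he => by simpa using hz 1 (List.mem_append_left _ he)
  have hb1 : b.count (1 : Fin 2) = 0 :=
    List.count_eq_zero.mpr fun he => by simpa using hz 1 (List.mem_append_right _ he)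
  -- counts in the original word
  have hx0 : a.count (0 : Fin 2) + b.count 0 + c.count 0 = m := by
    have h := congrArg (List.count (0 : Fin 2)) hsplit
    simp [List.count_append, List.count_replicate] at h
    omega
  have hx1 : c.count (1 : Fin 2) = q := by
    have := congrArg (List.count (1 : Fin 2)) hsplit
    simp [List.count_append, List.count_replicate, ha1, hb1] at this
    omega
  set t := b.length with ht
  have htpos : 1 ≤ t := List.length_pos_iff.mpr hbne
  have htq : ¬ q ∣ t := fun h => by have := Nat.le_of_dvd (by omega) h; omega
  have htz : (t : ZMod q) ≠ 0 := by
    rwa [Ne, ZMod.natCast_eq_zero_iff]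
  -- choose k so that q ∣ m + k * t
  obtain ⟨k, hk⟩ : ∃ k', k' = ((-(m : ZMod q)) * (t : ZMod q)⁻¹).val := ⟨_, rfl⟩
  have hdvd : q ∣ m + k * t := by
    rw [← ZMod.natCast_eq_zero_iff]
    push_cast
    rw [hk, ZMod.natCast_val, ZMod.cast_id, mul_assoc,
      inv_mul_cancel₀ htz, mul_one]
    ring
  -- the pumped word
  set w := a ++ (List.replicate (k + 1) b).flatten ++ c with hw
  have hwmem : w ∈ M.accepts := by
    apply hpump
    refine Language.mem_mul.mpr ⟨a ++ (List.replicate (k + 1) b).flatten,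
      Language.mem_mul.mpr ⟨a, rfl, _, ?_, rfl⟩, c, rfl, rfl⟩
    exact Language.join_mem_kstar fun y hy => by
      rw [List.eq_of_mem_replicate hy]; exact rfl
  rw [hM] at hwmem
  obtain ⟨m', n', hm', hn', hgcd, heq⟩ := hwmem
  -- compute counts of the pumped word
  have hflat0 : ((List.replicate (k + 1) b).flatten).count (0 : Fin 2) = (k + 1) * t := by
    rw [List.count_flatten, List.map_replicate, List.sum_replicate, smul_eq_mul, hb0]
  have hflat1 : ((List.replicate (k + 1) b).flatten).count (1 : Fin 2) = 0 := by
    rw [List.count_flatten, List.map_replicate, List.sum_replicate, smul_eq_mul, hb1,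
      mul_zero]
  have hw0 : w.count (0 : Fin 2) = m + k * t := by
    rw [hw, List.count_append, List.count_append, hflat0, ha0]
    have h := hx0
    rw [ha0, hb0] at h
    have hexp : (k + 1) * t = k * t + t := by ring
    omega
  have hw1 : w.count (1 : Fin 2) = q := by
    rw [hw, List.count_append, List.count_append, hflat1, ha1, hx1]
    omega
  have hm'' : m' = m + k * t := by
    have := congrArg (List.count (0 : Fin 2)) heq
    rw [hw0] at this
    simpa [List.count_append, List.count_replicate] using this.symm
  have hn'' : n' = q := by
    have := congrArg (List.count (1 : Fin 2)) heq
    rw [hw1] at this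
    simpa [List.count_append, List.count_replicate] using this.symm
  rw [hm'', hn''] at hgcd
  have : q ∣ 1 := hgcd ▸ Nat.dvd_gcd hdvd dvd_rfl
  have := Nat.le_of_dvd one_pos this
  have := hq.two_le
  omega
end

section
/- For every set I ⊆ ℕ and every j ≥ 1, the language A[I] satisfies |A[I]^(j)| ≤ 3. -/
open scoped Classical

/-- `I' = {3i : i ∈ ℕ} ∪ {3i+1 : i ∈ I} ∪ {3i+2 : i ∈ ℕ \\ I}`. -/
def Iext (I : Set ℕ) : Set ℕ :=
  {k | (∃ i : ℕ, k = 3 * i) ∨ (∃ i ∈ I, k = 3 * i + 1) ∨ (∃ i : ℕ, i ∉ I ∧ k = 3 * i + 2)}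

/-- The language `A[I] = {0^n : n ∈ I'}` of Construction 4.1. -/
def AofI (I : Set ℕ) : Set (List (Fin 1)) :=
  {w | ∃ n ∈ Iext I, w = List.replicate n 0}

theorem list_fin1_eq_replicate (w : List (Fin 1)) : w = List.replicate w.length 0 := by
  induction w with
  | nil => rfl
  | cons a t ih =>
    rw [List.length_cons, List.replicate_succ]
    rw [Fin.eq_zero a]
    exact congrArg _ ih

theorem not_lex_fin1 {z y : List (Fin 1)} (h : List.Lex (· < ·) z y) :
    z.length ≠ y.length := by
  induction h with
  | nil => simp
  | cons h ih => simpa using ih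
  | rel h => simp [Fin.eq_zero] at h

theorem shortlex_fin1 (z y : List (Fin 1)) : ShortlexLt z y ↔ z.length < y.length := by
  constructor
  · rintro (h | ⟨he, hl⟩)
    · exact h
    · exact absurd he (not_lex_fin1 hl)
  · exact Or.inl

theorem mem_AofI (I : Set ℕ) (w : List (Fin 1)) : w ∈ AofI I ↔ w.length ∈ Iext I := by
  constructor
  · rintro ⟨n, hn, rfl⟩; simpa using hn
  · intro h; exact ⟨w.length, h, list_fin1_eq_replicate w⟩

theorem mem_Iext_iff (I : Set ℕ) (M : ℕ) :
    M ∈ Iext I ↔ (M % 3 = 0 ∨ (M % 3 = 1 ∧ M / 3 ∈ I) ∨ (M % 3 = 2 ∧ M / 3 ∉ I)) := by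
  constructor
  · rintro (⟨i, rfl⟩ | ⟨i, hi, rfl⟩ | ⟨i, hi, rfl⟩)
    · left; omega
    · right; left
      refine ⟨by omega, ?_⟩
      have : (3 * i + 1) / 3 = i := by omega
      rwa [this]
    · right; right
      refine ⟨by omega, ?_⟩
      have : (3 * i + 2) / 3 = i := by omega
      rwa [this]
  · rintro (h | ⟨h, hI⟩ | ⟨h, hI⟩)
    · exact Or.inl ⟨M / 3, by omega⟩
    · exact Or.inr (Or.inl ⟨M / 3, hI, by omega⟩)
    · exact Or.inr (Or.inr ⟨M / 3, hI, by omega⟩)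

noncomputable def fI (I : Set ℕ) (N : ℕ) : ℕ :=
  2 * (N / 3) + (if N % 3 = 0 then 0 else if N % 3 = 1 then 1 else if N / 3 ∈ I then 2 else 1)

theorem fI_succ (I : Set ℕ) (M : ℕ) :
    fI I (M + 1) = fI I M + (if M ∈ Iext I then 1 else 0) := by
  have h3 : M % 3 = 0 ∨ M % 3 = 1 ∨ M % 3 = 2 := by omega
  rw [fI, fI, mem_Iext_iff]
  rcases h3 with h | h | h
  · have h1 : (M + 1) % 3 = 1 := by omega
    have h2 : (M + 1) / 3 = M / 3 := by omega
    rw [h1, h2]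
    simp [h]
  · have h1 : (M + 1) % 3 = 2 := by omega
    have h2 : (M + 1) / 3 = M / 3 := by omega
    rw [h1, h2]
    by_cases hM : M / 3 ∈ I <;> simp [h, hM]
  · have h1 : (M + 1) % 3 = 0 := by omega
    have h2 : (M + 1) / 3 = M / 3 + 1 := by omega
    rw [h1, h2]
    by_cases hM : M / 3 ∈ I <;> simp [h, hM] <;> omega

theorem count_eq (I : Set ℕ) (m : ℕ) (N : ℕ) :
    ((Finset.range N).filter (fun k => m + k ∈ Iext I)).card + fI I m = fI I (m + N) := by
  induction N with
  | zero => simp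
  | succ N ih =>
    rw [Finset.range_add_one, Finset.filter_insert]
    rw [show m + (N + 1) = (m + N) + 1 from rfl, fI_succ]
    by_cases h : m + N ∈ Iext I
    · rw [if_pos h, if_pos h, Finset.card_insert_of_notMem (by simp)]
      omega
    · rw [if_neg h, if_neg h]
      omega

theorem core (I : Set ℕ) (j m n : ℕ) (hj : 1 ≤ j)
    (h1 : m + n ∈ Iext I)
    (h2 : ((Finset.range n).filter (fun k => m + k ∈ Iext I)).card = j - 1) :
    n = (3 * j - 4 - j % 2) / 2 ∨ n = (3 * j - 4 - j % 2) / 2 + 1 ∨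
      n = (3 * j - 4 - j % 2) / 2 + 2 := by
  have hc := count_eq I m n
  rw [h2] at hc
  rw [mem_Iext_iff] at h1
  rw [fI, fI] at hc
  by_cases e1 : m / 3 ∈ I <;> by_cases e2 : (m + n) / 3 ∈ I <;>
    simp only [e1, e2, if_true, if_false, not_true, not_false_iff, and_true, and_false,
      or_false, false_or, iff_true, iff_false] at h1 hc <;>
    split_ifs at hc <;> omega

/-- For every `I ⊆ ℕ` and every `j ≥ 1`, `|A[I]^(j)| ≤ 3`. -/
theorem stmt8 (I : Set ℕ) (j : ℕ) (hj : 1 ≤ j) :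
    (ExtSet (AofI I) j).encard ≤ 3 := by
  set g := (3 * j - 4 - j % 2) / 2 with hg
  have hsub : ExtSet (AofI I) j ⊆
      {List.replicate g 0, List.replicate (g + 1) 0, List.replicate (g + 2) 0} := by
    rintro y ⟨x, hx⟩
    obtain ⟨hmem, hcard⟩ := hx
    set m := x.length with hm
    set n := y.length with hn
    have hset : {z | x ++ z ∈ AofI I ∧ ShortlexLt z y}
        = (fun k => List.replicate k (0 : Fin 1)) '' {k | k < n ∧ m + k ∈ Iext I} := by
      ext z
      simp only [Set.mem_setOf_eq, Set.mem_image, mem_AofI, shortlex_fin1, List.length_append]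
      constructor
      · rintro ⟨hz1, hz2⟩
        exact ⟨z.length, ⟨hz2, hz1⟩, (list_fin1_eq_replicate z).symm⟩
      · rintro ⟨k, ⟨hk1, hk2⟩, rfl⟩
        simp only [List.length_replicate]
        exact ⟨hk2, hk1⟩
    have hinj : Function.Injective (fun k => List.replicate k (0 : Fin 1)) := by
      intro a b hab
      simpa using congrArg List.length hab
    have hfin : ({k | k < n ∧ m + k ∈ Iext I} : Set ℕ)
        = ↑((Finset.range n).filter (fun k => m + k ∈ Iext I)) := by
      ext k
      simp [Finset.mem_filter, Finset.mem_range]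
    have hcard' : (((Finset.range n).filter (fun k => m + k ∈ Iext I)).card : ℕ∞)
        = ((j - 1 : ℕ) : ℕ∞) := by
      rw [← Set.encard_coe_eq_coe_finsetCard, ← hfin,
        ← hinj.encard_image, ← hset]
      exact hcard
    have hc2 : ((Finset.range n).filter (fun k => m + k ∈ Iext I)).card = j - 1 :=
      Nat.cast_inj.mp hcard'
    have hmn : m + n ∈ Iext I := by
      have := (mem_AofI I (x ++ y)).mp hmem
      simpa [List.length_append] using this
    have hcases := core I j m n hj hmn hc2
    have hy : y = List.replicate n 0 := list_fin1_eq_replicate y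
    rcases hcases with h | h | h
    · left; rw [hy, h]
    · right; left; rw [hy, h]
    · right; right; rw [hy, h]; rfl
  refine le_trans (Set.encard_mono hsub) ?_
  refine le_trans (Set.encard_insert_le _ _) ?_
  refine le_trans (add_le_add_left (Set.encard_insert_le _ _) 1) ?_
  rw [Set.encard_singleton]
  norm_num
end

section
/- There exists a language A over the one-letter alphabet {0} that is not regular but has bounded ordinal extensions. -/
namespace Stmt9Aux

noncomputable def β : ℝ := Real.sqrt 2 / 2

lemma sqrt2_sq : Real.sqrt 2 ^ 2 = 2 := Real.sq_sqrt (by norm_num)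

lemma β_pos : 0 < β := by
  have := Real.sqrt_pos.mpr (show (0:ℝ) < 2 by norm_num)
  unfold β; linarith

lemma β_lt_one : β < 1 := by
  have h := sqrt2_sq
  have h2 := Real.sqrt_nonneg 2
  unfold β; nlinarith

lemma β_gt : (2:ℝ)/3 < β := by
  have h := sqrt2_sq
  have h2 := Real.sqrt_nonneg 2
  unfold β; nlinarith

lemma β_irr : Irrational β := irrational_sqrt_two.div_natCast (by norm_num : (2:ℕ) ≠ 0)

def S : Set ℕ := {m | ⌊((m:ℝ)+1)*β⌋ = ⌊(m:ℝ)*β⌋ + 1}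

noncomputable local instance (m : ℕ) : Decidable (m ∈ S) := Classical.dec _

def A : Set (List (Fin 1)) := {w | w.length ∈ S}

lemma g_eq (m : ℕ) : ⌊((m:ℝ)+1)*β⌋ = ⌊(m:ℝ)*β⌋ + (if m ∈ S then 1 else 0) := by
  have h1 : ⌊(m:ℝ)*β⌋ ≤ ⌊((m:ℝ)+1)*β⌋ := by
    apply Int.floor_le_floor; nlinarith [β_pos, Nat.cast_nonneg (α := ℝ) m]
  have h2 : ⌊((m:ℝ)+1)*β⌋ ≤ ⌊(m:ℝ)*β⌋ + 1 := by
    have hle : ((m:ℝ)+1)*β ≤ (m:ℝ)*β + 1 := by nlinarith [β_lt_one, β_pos]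
    calc ⌊((m:ℝ)+1)*β⌋ ≤ ⌊(m:ℝ)*β + 1⌋ := Int.floor_le_floor hle
      _ = ⌊(m:ℝ)*β⌋ + 1 := Int.floor_add_one _
  by_cases hm : m ∈ S
  · rw [if_pos hm]; exact hm
  · have hm' : ⌊((m:ℝ)+1)*β⌋ ≠ ⌊(m:ℝ)*β⌋ + 1 := hm
    rw [if_neg hm]
    omega

lemma floor_sum (n b : ℕ) :
    ⌊((n:ℝ)+b)*β⌋ = ⌊(n:ℝ)*β⌋ + ∑ i ∈ Finset.range b, (if (n+i) ∈ S then (1:ℤ) else 0) := by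
  induction b with
  | zero => simp
  | succ b ih =>
    rw [Finset.sum_range_succ, ← add_assoc, ← ih]
    have h := g_eq (n+b)
    have hc : ((n+b : ℕ):ℝ) = (n:ℝ) + b := by push_cast; ring
    rw [hc] at h
    have hc2 : ((n:ℝ)+((b:ℕ)+1:ℕ)) = ((n:ℝ)+b)+1 := by push_cast; ring
    rw [hc2]
    exact h

lemma rep_eq (z : List (Fin 1)) : z = List.replicate z.length 0 :=
  List.eq_replicate_length.mpr fun b _ => Subsingleton.elim b 0

lemma rep_inj : Function.Injective (fun i => List.replicate i (0 : Fin 1)) := by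
  intro a b h
  simpa using congrArg List.length h

lemma lex_irrefl (l : List (Fin 1)) : ¬ List.Lex (· < ·) l l := by
  induction l with
  | nil => intro h; cases h
  | cons a t ih =>
    intro h
    cases h with
    | rel h => exact absurd h (lt_irrefl a)
    | cons h => exact ih h

lemma shortlex_iff (z y : List (Fin 1)) : ShortlexLt z y ↔ z.length < y.length := by
  constructor
  · rintro (h | ⟨hl, hlex⟩)
    · exact h
    · exfalso
      have hzy : z = y := by rw [rep_eq z, rep_eq y, hl]
      rw [hzy] at hlex
      exact lex_irrefl y hlex
  · exact Or.inl

lemma length_bound {j : ℕ} (hj : 1 ≤ j) {y : List (Fin 1)} (hy : y ∈ ExtSet A j) :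
    |(y.length : ℝ) * β - ((j:ℝ) - 1)| < 1 := by
  obtain ⟨x, hmem, hcard⟩ := hy
  set n := x.length with hn
  set k := y.length with hk
  have hset : {z | x ++ z ∈ A ∧ ShortlexLt z y}
      = (fun i => List.replicate i (0:Fin 1)) '' {i | (n+i) ∈ S ∧ i < k} := by
    ext z
    simp only [Set.mem_setOf_eq, Set.mem_image, A, List.length_append, shortlex_iff]
    constructor
    · intro ⟨h1, h2⟩
      exact ⟨z.length, ⟨h1, h2⟩, (rep_eq z).symm⟩
    · rintro ⟨i, ⟨h1, h2⟩, rfl⟩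
      simpa using ⟨h1, h2⟩
  have hT : {i | (n+i) ∈ S ∧ i < k}
      = ↑((Finset.range k).filter (fun i => (n+i) ∈ S)) := by
    ext i
    simp [Finset.mem_filter, Finset.mem_range, and_comm]
  rw [hset, rep_inj.encard_image, hT, Set.encard_coe_eq_coe_finsetCard] at hcard
  have hcard' : ((Finset.range k).filter (fun i => (n+i) ∈ S)).card = j - 1 :=
    Nat.cast_inj.mp hcard
  have hsum : (((Finset.range k).filter (fun i => (n+i) ∈ S)).card : ℤ)
      = ∑ i ∈ Finset.range k, (if (n+i) ∈ S then (1:ℤ) else 0) := by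
    rw [Finset.card_filter, Nat.cast_sum]
    refine Finset.sum_congr rfl fun i _ => ?_
    split <;> simp
  have hfl : ⌊((n:ℝ)+k)*β⌋ = ⌊(n:ℝ)*β⌋ + ((j:ℤ) - 1) := by
    rw [floor_sum n k, ← hsum, hcard']
    congr 1
    omega
  have h1 := Int.floor_le (((n:ℝ)+k)*β)
  have h2 := Int.sub_one_lt_floor (((n:ℝ)+k)*β)
  have h3 := Int.floor_le ((n:ℝ)*β)
  have h4 := Int.sub_one_lt_floor ((n:ℝ)*β)
  have hflR : ((⌊((n:ℝ)+k)*β⌋ : ℝ)) = (⌊(n:ℝ)*β⌋ : ℝ) + ((j:ℝ) - 1) := by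
    exact_mod_cast congrArg (fun z : ℤ => (z:ℝ)) hfl
  rw [abs_sub_lt_iff]
  constructor <;> nlinarith

lemma no_period {n1 p : ℕ} (hp : 1 ≤ p)
    (hper : ∀ m, n1 ≤ m → (m ∈ S ↔ m + p ∈ S)) : False := by
  set c : ℤ := ⌊((n1:ℝ)+p)*β⌋ - ⌊(n1:ℝ)*β⌋ with hc
  have perK : ∀ K : ℕ, ∀ m, n1 ≤ m → (m ∈ S ↔ m + K*p ∈ S) := by
    intro K
    induction K with
    | zero => intro m _; simp
    | succ K ih =>
      intro m hm
      have h1 := ih m hm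
      have h2 := hper (m + K*p) (by omega)
      have hring : m + (K+1)*p = m + K*p + p := by ring
      rw [hring, h1, h2]
  have FK : ∀ K : ℕ, ⌊((n1:ℝ)+(K:ℝ)*p)*β⌋ = ⌊(n1:ℝ)*β⌋ + K*c := by
    intro K
    induction K with
    | zero => simp
    | succ K ih =>
      have e1 := floor_sum (n1+K*p) p
      have hc1 : ((n1+K*p : ℕ):ℝ) = (n1:ℝ) + (K:ℝ)*p := by push_cast; ring
      rw [hc1] at e1
      have hsums : ∑ i ∈ Finset.range p, (if (n1+K*p+i) ∈ S then (1:ℤ) else 0)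
          = ∑ i ∈ Finset.range p, (if (n1+i) ∈ S then (1:ℤ) else 0) := by
        refine Finset.sum_congr rfl fun i _ => ?_
        have hiff := perK K (n1+i) (by omega)
        have hidx : n1 + K*p + i = (n1+i) + K*p := by ring
        rw [hidx]
        exact if_congr hiff.symm rfl rfl
      have e2 := floor_sum n1 p
      have hgoal : ((n1:ℝ)+((K:ℕ)+1:ℕ)*p)*β = (((n1:ℝ) + (K:ℝ)*p)+(p:ℝ))*β := by
        push_cast; ring
      rw [hgoal]
      have e1' : ⌊(((n1:ℝ) + (K:ℝ)*p)+(p:ℝ))*β⌋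
          = ⌊((n1:ℝ) + (K:ℝ)*p)*β⌋ + ∑ i ∈ Finset.range p, (if (n1+K*p+i) ∈ S then (1:ℤ) else 0) := e1
      rw [e1', hsums, ih]
      have : (∑ i ∈ Finset.range p, (if (n1+i) ∈ S then (1:ℤ) else 0)) = c := by
        rw [hc, e2]; ring
      rw [this]
      push_cast
      ring
  have hKc : ∀ K : ℕ, |(K:ℝ)*((c:ℝ) - (p:ℝ)*β)| < 1 := by
    intro K
    have h := FK K
    have hR : ((⌊((n1:ℝ)+(K:ℝ)*p)*β⌋ : ℤ) : ℝ) = (⌊(n1:ℝ)*β⌋ : ℝ) + (K:ℝ)*(c:ℝ) := by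
      exact_mod_cast congrArg (fun z : ℤ => (z:ℝ)) h
    have h1 := Int.floor_le (((n1:ℝ)+(K:ℝ)*p)*β)
    have h2 := Int.sub_one_lt_floor (((n1:ℝ)+(K:ℝ)*p)*β)
    have h3 := Int.floor_le ((n1:ℝ)*β)
    have h4 := Int.sub_one_lt_floor ((n1:ℝ)*β)
    rw [abs_lt]
    constructor <;> nlinarith
  have hpne : (p:ℕ) ≠ 0 := by omega
  have hirr : Irrational ((p:ℝ)*β) := β_irr.natCast_mul hpne
  have hne : ((c:ℝ)) ≠ (p:ℝ)*β := fun h => hirr.ne_int c h.symm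
  set δ := |(c:ℝ) - (p:ℝ)*β| with hδdef
  have hδ : 0 < δ := abs_pos.mpr (sub_ne_zero.mpr hne)
  obtain ⟨K, hK⟩ := exists_nat_gt (1/δ)
  have hKδ : 1 < (K:ℝ)*δ := by
    rw [div_lt_iff₀ hδ] at hK
    linarith
  have := hKc K
  rw [abs_mul, abs_of_nonneg (Nat.cast_nonneg K : (0:ℝ) ≤ K)] at this
  rw [← hδdef] at this
  linarith

lemma A_not_regular : ¬ Language.IsRegular (A : Language (Fin 1)) := by
  rintro ⟨σ, fin, M, hM⟩
  set q : ℕ → σ := fun m => M.eval (List.replicate m (0:Fin 1)) with hq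
  have hq_mem : ∀ m : ℕ, m ∈ S ↔ q m ∈ M.accept := by
    intro m
    have h1 : List.replicate m (0:Fin 1) ∈ M.accepts ↔ q m ∈ M.accept := DFA.mem_accepts M
    rw [hM] at h1
    have h2 : List.replicate m (0:Fin 1) ∈ A ↔ m ∈ S := by simp [A]
    exact h2.symm.trans h1
  have hq_add : ∀ a b : ℕ, q (a + b) = M.evalFrom (q a) (List.replicate b 0) := by
    intro a b
    simp only [hq, DFA.eval, List.replicate_add, DFA.evalFrom_of_append]
  have key : ∀ a b : ℕ, a < b → q a = q b → False := by
    intro a b hab hqe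
    have hp : 1 ≤ b - a := by omega
    apply no_period hp (n1 := a)
    intro m hm
    have h1 : q m = q (m + (b - a)) := by
      have h2 := hq_add a (m - a)
      have h3 := hq_add b (m - a)
      have h4 : q (a + (m-a)) = q (b + (m-a)) := by rw [h2, h3, hqe]
      have hma : a + (m - a) = m := by omega
      have hbi : b + (m - a) = m + (b - a) := by omega
      rw [hma, hbi] at h4
      exact h4
    rw [hq_mem, hq_mem, h1]
  obtain ⟨m1, m2, hne, heq⟩ := Finite.exists_ne_map_eq_of_infinite q
  rcases hne.lt_or_gt with h | h
  · exact key m1 m2 h heq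
  · exact key m2 m1 h heq.symm

end Stmt9Aux

/-- There is a nonregular language over the one-letter alphabet with bounded
ordinal extensions. -/
theorem stmt9 :
    ∃ A : Set (List (Fin 1)), ¬ Language.IsRegular A ∧
      ∃ m : ℕ, 1 ≤ m ∧ ∀ j : ℕ, 1 ≤ j → (ExtSet A j).encard ≤ (m : ℕ∞) := by
  refine ⟨Stmt9Aux.A, Stmt9Aux.A_not_regular, 5, by norm_num, ?_⟩
  intro j hj
  by_cases hE : ExtSet Stmt9Aux.A j = ∅
  · simp [hE]
  obtain ⟨y0, hy0⟩ := Set.nonempty_iff_ne_empty.mpr hE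
  have hsub : ExtSet Stmt9Aux.A j ⊆ (fun i => List.replicate i (0:Fin 1)) ''
      {y0.length - 2, y0.length - 1, y0.length, y0.length + 1, y0.length + 2} := by
    intro y hy
    have h1 := Stmt9Aux.length_bound hj hy
    have h0 := Stmt9Aux.length_bound hj hy0
    have hd : |(y.length:ℝ)*Stmt9Aux.β - (y0.length:ℝ)*Stmt9Aux.β| < 2 := by
      calc |(y.length:ℝ)*Stmt9Aux.β - (y0.length:ℝ)*Stmt9Aux.β|
          ≤ |(y.length:ℝ)*Stmt9Aux.β - ((j:ℝ)-1)| + |(y0.length:ℝ)*Stmt9Aux.β - ((j:ℝ)-1)| :=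
            abs_sub_le_iff.mpr ⟨by have := abs_sub_abs_le_abs_sub ((y.length:ℝ)*Stmt9Aux.β) ((y0.length:ℝ)*Stmt9Aux.β); nlinarith [abs_le.mp (le_refl |(y.length:ℝ)*Stmt9Aux.β - ((j:ℝ)-1)|), neg_abs_le ((y.length:ℝ)*Stmt9Aux.β - ((j:ℝ)-1)), le_abs_self ((y.length:ℝ)*Stmt9Aux.β - ((j:ℝ)-1)), neg_abs_le ((y0.length:ℝ)*Stmt9Aux.β - ((j:ℝ)-1)), le_abs_self ((y0.length:ℝ)*Stmt9Aux.β - ((j:ℝ)-1))], by nlinarith [neg_abs_le ((y.length:ℝ)*Stmt9Aux.β - ((j:ℝ)-1)), le_abs_self ((y.length:ℝ)*Stmt9Aux.β - ((j:ℝ)-1)), neg_abs_le ((y0.length:ℝ)*Stmt9Aux.β - ((j:ℝ)-1)), le_abs_self ((y0.length:ℝ)*Stmt9Aux.β - ((j:ℝ)-1))]⟩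
        _ < 1 + 1 := by linarith
        _ = 2 := by norm_num
    have hreal : |(y.length:ℝ) - (y0.length:ℝ)| < 3 := by
      have hfac : (y.length:ℝ)*Stmt9Aux.β - (y0.length:ℝ)*Stmt9Aux.β
          = ((y.length:ℝ) - (y0.length:ℝ))*Stmt9Aux.β := by ring
      rw [hfac, abs_mul, abs_of_pos Stmt9Aux.β_pos] at hd
      nlinarith [Stmt9Aux.β_gt, abs_nonneg ((y.length:ℝ) - (y0.length:ℝ))]
    rw [abs_sub_lt_iff] at hreal
    have hA : y.length < y0.length + 3 := by exact_mod_cast (by linarith [hreal.1] : (y.length:ℝ) < (y0.length:ℝ) + 3)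
    have hB : y0.length < y.length + 3 := by exact_mod_cast (by linarith [hreal.2] : (y0.length:ℝ) < (y.length:ℝ) + 3)
    refine ⟨y.length, ?_, (Stmt9Aux.rep_eq y).symm⟩
    simp only [Set.mem_insert_iff, Set.mem_singleton_iff]
    omega
  calc (ExtSet Stmt9Aux.A j).encard
      ≤ _ := Set.encard_mono hsub
    _ ≤ ({y0.length - 2, y0.length - 1, y0.length, y0.length + 1, y0.length + 2} : Set ℕ).encard :=
        Set.encard_image_le _ _
    _ ≤ 5 := by
        refine le_trans (Set.encard_insert_le _ _) ?_
        refine le_trans (add_le_add_left (Set.encard_insert_le _ _) 1) ?_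
        refine le_trans (add_le_add_left (add_le_add_left (Set.encard_insert_le _ _) 1) 1) ?_
        refine le_trans (add_le_add_left (add_le_add_left (add_le_add_left (Set.encard_insert_le _ _) 1) 1) 1) ?_
        simp [Set.encard_singleton]
        rfl
    _ = ((5:ℕ) : ℕ∞) := by norm_num
end

section
/- Let A ⊆ Σ* and j ≥ 1. If UE(A) has at least j elements, then A^(j) is finite. -/
/-- `UE(A)`: the set of universal `A`-extensions. -/
def UE {σ : Type*} (A : Set (List σ)) : Set (List σ) :=
  {y | ∀ x : List σ, x ++ y ∈ A}

/-- If `UE(A)` has at least `j` elements, then `A^(j)` is finite. -/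
theorem stmt12 {σ : Type*} [Fintype σ] [Nonempty σ] [LinearOrder σ]
    (A : Set (List σ)) (j : ℕ) (hj : 1 ≤ j)
    (h : (j : ℕ∞) ≤ (UE A).encard) :
    (ExtSet A j).Finite := by
  obtain ⟨t, hts, htj⟩ := Set.exists_subset_encard_eq h
  have htfin : t.Finite := Set.finite_of_encard_eq_coe htj
  obtain ⟨M, hM⟩ := (htfin.image List.length).bddAbove
  apply Set.Finite.subset (List.finite_length_le (α := σ) (n := M))
  intro y hy
  obtain ⟨x, hxA, hcard⟩ := hy
  by_contra hlen
  simp only [Set.mem_setOf_eq, not_le] at hlen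
  have hsub : t ⊆ {z | x ++ z ∈ A ∧ ShortlexLt z y} := by
    intro z hz
    exact ⟨hts hz x, Or.inl (lt_of_le_of_lt (hM ⟨z, hz, rfl⟩) hlen)⟩
  have hle := Set.encard_mono hsub
  rw [htj, hcard] at hle
  have : j ≤ j - 1 := Nat.cast_le.mp hle
  omega
end

section
/- Let A ⊆ Σ*. If UE(A) is infinite, then A does not have infinite ordinal extensions, i.e., A^(j) is finite for every j ≥ 1. -/
/-- If `UE(A)` is infinite, then `A` does not have infinite ordinal
extensions. -/
theorem stmt13 {σ : Type*} [Fintype σ] [Nonempty σ] [LinearOrder σ]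
    (A : Set (List σ)) (h : (UE A).Infinite) :
    ∀ j : ℕ, 1 ≤ j → (ExtSet A j).Finite := by
  intro j hj
  obtain ⟨S, hS, hcard⟩ := h.exists_subset_card_eq j
  apply (List.finite_length_le σ (S.sup List.length)).subset
  intro y hy
  by_contra hlen
  simp only [Set.mem_setOf_eq, not_le] at hlen
  obtain ⟨x, hxA, henc⟩ := hy
  have hsub : (S : Set (List σ)) ⊆ {z | x ++ z ∈ A ∧ ShortlexLt z y} := by
    intro s hs
    exact ⟨hS hs x, Or.inl (lt_of_le_of_lt (Finset.le_sup hs) hlen)⟩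
  have hle := Set.encard_mono hsub
  rw [Set.encard_coe_eq_coe_finsetCard, hcard, henc] at hle
  have : j ≤ j - 1 := by exact_mod_cast hle
  omega
end

section
/- The Kamae–Weiss language A = {u 1 1 0^n 1 0^n : u ∈ {0,1}* and n ≥ 1} does not have infinite ordinal extensions; that is, A^(j) is finite for every j ≥ 1. -/
/-- The Kamae–Weiss language `A = {u 1 1 0^n 1 0^n : u ∈ {0,1}*, n ≥ 1}` does
not have infinite ordinal extensions. -/
theorem stmt14 :
    ∀ j : ℕ, 1 ≤ j →
      (ExtSet {w : List (Fin 2) | ∃ u : List (Fin 2), ∃ n : ℕ, 1 ≤ n ∧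
        w = u ++ [1, 1] ++ List.replicate n 0 ++ [1] ++ List.replicate n 0} j).Finite := by
  intro j hj
  apply Set.Finite.subset (List.finite_length_le (Fin 2) (j + 4))
  rintro y ⟨x, hmem, hcard⟩
  simp only [Set.mem_setOf_eq]
  set S := {z : List (Fin 2) | (∃ u : List (Fin 2), ∃ n : ℕ, 1 ≤ n ∧
      x ++ z = u ++ [1, 1] ++ List.replicate n 0 ++ [1] ++ List.replicate n 0) ∧
      ShortlexLt z y} with hS
  have key : ((y.length - 5 : ℕ) : ℕ∞) ≤ ((j - 1 : ℕ) : ℕ∞) := by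
    rw [← hcard]
    set f : ℕ → List (Fin 2) := fun L => List.replicate (L - 5) (0 : Fin 2) ++ [1, 1, 0, 1, 0]
      with hf
    have hlen : ∀ L, 5 ≤ L → (f L).length = L := by
      intro L hL
      simp [hf]
      omega
    have hmaps : Set.MapsTo f ((Finset.Ico 5 y.length : Finset ℕ) : Set ℕ) S := by
      intro L hL
      simp only [Finset.coe_Ico, Set.mem_Ico] at hL
      constructor
      · refine ⟨x ++ List.replicate (L - 5) 0, 1, le_refl 1, ?_⟩
        simp [hf, List.append_assoc]
      · exact Or.inl (by rw [hlen L hL.1]; exact hL.2)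
    have hinj : Set.InjOn f ((Finset.Ico 5 y.length : Finset ℕ) : Set ℕ) := by
      intro a ha b hb hab
      simp only [Finset.coe_Ico, Set.mem_Ico] at ha hb
      have := congrArg List.length hab
      rw [hlen a ha.1, hlen b hb.1] at this
      exact this
    calc ((y.length - 5 : ℕ) : ℕ∞)
        = ((Finset.Ico 5 y.length : Finset ℕ) : Set ℕ).encard := by
          rw [Set.encard_coe_eq_coe_finsetCard, Nat.card_Ico]
      _ ≤ S.encard := Set.encard_le_encard_of_injOn hmaps hinj
  have : y.length - 5 ≤ j - 1 := by exact_mod_cast key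
  omega
end

section
/- For all j ≥ 1, B_0^j · {0^3} = B_0^{j+2} and B_1^j · {0^3} = B_1^{j+2}; and for all j ≥ 2, B_2^j · {0^3} = B_2^{j+2}. -/
/-- The languages `B_0^j` of Construction 4.4 (over the one-letter alphabet). -/
def B0 : ℕ → Language (Fin 1)
  | 0 => 0
  | 1 => {[]}
  | (n + 2) => if (n + 2) % 2 = 0 then B0 (n + 1) * {[0], [0, 0]} else B0 n * {[0, 0, 0]}

/-- The languages `B_1^j` of Construction 4.4 (over the one-letter alphabet). -/
def B1 : ℕ → Language (Fin 1)
  | 0 => 0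
  | 1 => {[], [0]}
  | 2 => {[0, 0]}
  | (n + 3) => if (n + 3) % 2 = 0 then B1 (n + 1) * {[0, 0, 0]} else B1 (n + 2) * {[0], [0, 0]}

/-- The languages `B_2^j` of Construction 4.4 (over the one-letter alphabet). -/
def B2 : ℕ → Language (Fin 1)
  | 0 => 0
  | 1 => {[], [0]}
  | 2 => {[0], [0, 0], [0, 0, 0]}
  | (n + 3) => if (n + 3) % 2 = 0 then B2 (n + 2) * {[0, 0]} else B2 (n + 2) * {[0]}

lemma key1 : ({[0], [0, 0]} : Language (Fin 1)) * {[0, 0, 0]}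
    = ({[0, 0, 0]} : Language (Fin 1)) * {[0], [0, 0]} := by
  ext x
  simp only [Language.mem_mul, Set.mem_insert_iff, Set.mem_singleton_iff]
  constructor
  · rintro ⟨a, (rfl | rfl), b, rfl, rfl⟩
    · exact ⟨[0,0,0], rfl, [0], Or.inl rfl, rfl⟩
    · exact ⟨[0,0,0], rfl, [0,0], Or.inr rfl, rfl⟩
  · rintro ⟨a, rfl, b, (rfl | rfl), rfl⟩
    · exact ⟨[0], Or.inl rfl, [0,0,0], rfl, rfl⟩
    · exact ⟨[0,0], Or.inr rfl, [0,0,0], rfl, rfl⟩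

lemma key2 : ({[0]} : Language (Fin 1)) * {[0, 0]} = ({[0, 0, 0]} : Language (Fin 1)) := by
  ext x
  simp only [Language.mem_mul, Set.mem_singleton_iff]
  constructor
  · rintro ⟨a, rfl, b, rfl, rfl⟩; rfl
  · rintro rfl; exact ⟨_, rfl, _, rfl, rfl⟩

lemma key3 : ({[0, 0]} : Language (Fin 1)) * {[0]} = ({[0, 0, 0]} : Language (Fin 1)) := by
  ext x
  simp only [Language.mem_mul, Set.mem_singleton_iff]
  constructor
  · rintro ⟨a, rfl, b, rfl, rfl⟩; rfl
  · rintro rfl; exact ⟨_, rfl, _, rfl, rfl⟩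

lemma key4 : ({[], [0]} : Language (Fin 1)) * {[0, 0, 0]}
    = ({[0, 0]} : Language (Fin 1)) * {[0], [0, 0]} := by
  ext x
  simp only [Language.mem_mul, Set.mem_insert_iff, Set.mem_singleton_iff]
  constructor
  · rintro ⟨a, (rfl | rfl), b, rfl, rfl⟩
    · exact ⟨[0,0], rfl, [0], Or.inl rfl, rfl⟩
    · exact ⟨[0,0], rfl, [0,0], Or.inr rfl, rfl⟩
  · rintro ⟨a, rfl, b, (rfl | rfl), rfl⟩
    · exact ⟨[], Or.inl rfl, [0,0,0], rfl, rfl⟩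
    · exact ⟨[0], Or.inr rfl, [0,0,0], rfl, rfl⟩

/-- Lemma A.1: `B_0^j · {0³} = B_0^{j+2}` and `B_1^j · {0³} = B_1^{j+2}` for
`j ≥ 1`, and `B_2^j · {0³} = B_2^{j+2}` for `j ≥ 2`. -/
theorem stmt15 :
    (∀ j : ℕ, 1 ≤ j → B0 j * {[0, 0, 0]} = B0 (j + 2)) ∧
    (∀ j : ℕ, 1 ≤ j → B1 j * {[0, 0, 0]} = B1 (j + 2)) ∧
    (∀ j : ℕ, 2 ≤ j → B2 j * {[0, 0, 0]} = B2 (j + 2)) := by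
  refine ⟨?_, ?_, ?_⟩
  · intro j hj
    rcases Nat.even_or_odd j with ⟨k, rfl⟩ | ⟨k, rfl⟩
    · -- j even ≥ 2, write j = 2m + 2
      obtain ⟨m, rfl⟩ : ∃ m, k = m + 1 := ⟨k - 1, by omega⟩
      rw [show m + 1 + (m + 1) = 2 * m + 2 from by ring]
      have e1 : B0 (2 * m + 2) = B0 (2 * m + 1) * {[0], [0, 0]} := by
        rw [B0, if_pos (by omega)]
      have e2 : B0 (2 * m + 2 + 2) = B0 (2 * m + 1) * {[0, 0, 0]} * {[0], [0, 0]} := by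
        rw [show (2 * m + 2 + 2 : ℕ) = 2 * m + 2 + 2 from rfl, B0, if_pos (by omega)]
        congr 1
        rw [show (2 * m + 2 + 1 : ℕ) = 2 * m + 1 + 2 from by ring, B0, if_neg (by omega)]
      rw [e1, e2, mul_assoc, mul_assoc, key1]
    · -- j = 2k + 1 odd
      rw [show (2 * k + 1 + 2 : ℕ) = 2 * k + 1 + 2 from rfl, B0, if_neg (by omega)]
  · intro j hj
    rcases Nat.even_or_odd j with ⟨k, rfl⟩ | ⟨k, rfl⟩
    · -- j even ≥ 2 : direct by definition
      obtain ⟨m, rfl⟩ : ∃ m, k = m + 1 := ⟨k - 1, by omega⟩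
      rw [show m + 1 + (m + 1) = 2 * m + 2 from by ring,
        show (2 * m + 2 + 2 : ℕ) = 2 * m + 1 + 3 from by ring, B1, if_pos (by omega)]
    · rcases Nat.eq_zero_or_pos k with rfl | hk
      · -- j = 1
        show B1 1 * {[0, 0, 0]} = B1 3
        have h : ∀ n, B1 (n + 3) = if (n + 3) % 2 = 0 then B1 (n + 1) * {[0, 0, 0]}
            else B1 (n + 2) * {[0], [0, 0]} := fun n => by rw [B1]
        rw [show (3 : ℕ) = 0 + 3 from rfl, h 0, if_neg (by omega)]
        exact key4
      · -- j = 2m + 3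
        obtain ⟨m, rfl⟩ : ∃ m, k = m + 1 := ⟨k - 1, by omega⟩
        rw [show 2 * (m + 1) + 1 = 2 * m + 3 from by ring]
        have e1 : B1 (2 * m + 3) = B1 (2 * m + 2) * {[0], [0, 0]} := by
          rw [show (2 * m + 3 : ℕ) = 2 * m + 3 from rfl, B1, if_neg (by omega)]
        have e2 : B1 (2 * m + 3 + 2) = B1 (2 * m + 2) * {[0, 0, 0]} * {[0], [0, 0]} := by
          rw [show (2 * m + 3 + 2 : ℕ) = 2 * m + 2 + 3 from by ring, B1, if_neg (by omega)]
          congr 1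
          rw [show (2 * m + 2 + 2 : ℕ) = 2 * m + 1 + 3 from by ring, B1, if_pos (by omega)]
        rw [e1, e2, mul_assoc, mul_assoc, key1]
  · intro j hj
    obtain ⟨m, rfl⟩ : ∃ m, j = m + 2 := ⟨j - 2, by omega⟩
    have h : ∀ n, B2 (n + 3) = if (n + 3) % 2 = 0 then B2 (n + 2) * {[0, 0]}
        else B2 (n + 2) * {[0]} := fun n => by rw [B2]
    rcases Nat.even_or_odd m with hm | hm
    · -- j = m + 2 even
      rw [Nat.even_iff] at hm
      have e2 : B2 (m + 2 + 2) = B2 (m + 2) * {[0]} * {[0, 0]} := by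
        rw [show (m + 2 + 2 : ℕ) = m + 1 + 3 from by ring, h (m + 1), if_pos (by omega)]
        congr 1
        rw [show (m + 1 + 2 : ℕ) = m + 3 from by ring, h m, if_neg (by omega)]
      rw [e2, mul_assoc, key2]
    · -- j = m + 2 odd
      rw [Nat.odd_iff] at hm
      have e2 : B2 (m + 2 + 2) = B2 (m + 2) * {[0, 0]} * {[0]} := by
        rw [show (m + 2 + 2 : ℕ) = m + 1 + 3 from by ring, h (m + 1), if_neg (by omega)]
        congr 1
        rw [show (m + 1 + 2 : ℕ) = m + 3 from by ring, h m, if_pos (by omega)]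
      rw [e2, mul_assoc, key3]
end
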